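/- Let X ⊆ ℝⁿ be a nonempty, compact, convex set with homogenization X̃, let E and I be finite index sets, let a_i ∈ ℝ and b_i : E → ℝ for each i ∈ I, and let λ : I → ℝ with λ(i) ≥ 0 for all i ∈ I. Define a = ∑_{i ∈ I} λ(i)·a_i and b(e) = ∑_{i ∈ I} λ(i)·b_i(e) for each e ∈ E. Let y_v ∈ ℝ, y : E → ℝ, z ∈ ℝⁿ, and zᵉ : E → ℝⁿ be arbitrary. If for every i ∈ I one has (a_i • z + ∑_{e ∈ E} b_i(e) • zᵉ(e), a_i·y_v + ∑_{e ∈ E} b_i(e)·y(e)) ∈ X̃, then (a • z + ∑_{e ∈ E} b(e) • zᵉ(e), a·y_v + ∑_{e ∈ E} b(e)·y(e)) ∈ X̃. -/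

import Mathlib

open Pointwise

/-- The homogenization of a set `X ⊆ ℝⁿ`:
`X̃ = {(x, y) : y ≥ 0 and x ∈ y • X}`. -/
def homogenization {n : ℕ} (X : Set (Fin n → ℝ)) : Set ((Fin n → ℝ) × ℝ) :=
  {p | 0 ≤ p.2 ∧ p.1 ∈ p.2 • X}

/-- Redundancy preservation (Proposition 1): the homogenized constraint generated from a
nonnegative combination of linear inequalities is implied by the homogenized constraints
generated from those inequalities. -/
theorem redundancy_preservation {n : ℕ} (X : Set (Fin n → ℝ))
    (hne : X.Nonempty) (hcomp : IsCompact X) (hconv : Convex ℝ X)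
    (E I : Type*) [Fintype E] [Fintype I]
    (a : I → ℝ) (b : I → E → ℝ) (lam : I → ℝ) (hlam : ∀ i, 0 ≤ lam i)
    (yv : ℝ) (y : E → ℝ) (z : Fin n → ℝ) (ze : E → (Fin n → ℝ))
    (h : ∀ i, (a i • z + ∑ e, b i e • ze e,
        a i * yv + ∑ e, b i e * y e) ∈ homogenization X) :
    ((∑ i, lam i * a i) • z + ∑ e, (∑ i, lam i * b i e) • ze e,
      (∑ i, lam i * a i) * yv + ∑ e, (∑ i, lam i * b i e) * y e)
      ∈ homogenization X := by
  -- The homogenization contains 0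
  have hzero : (0 : (Fin n → ℝ) × ℝ) ∈ homogenization X := by
    refine ⟨le_refl 0, ?_⟩
    show (0 : Fin n → ℝ) ∈ (0 : ℝ) • X
    rw [Set.zero_smul_set hne]
    exact Set.mem_singleton _
  -- Closed under nonnegative scalar multiplication
  have hsmul : ∀ (c : ℝ), 0 ≤ c → ∀ p ∈ homogenization X,
      c • p ∈ homogenization X := by
    rintro c hc ⟨x, t⟩ ⟨ht, u, hu, hxu⟩
    simp only at hxu ht
    refine ⟨mul_nonneg hc ht, u, hu, ?_⟩
    simp only [Prod.smul_snd, Prod.smul_fst, smul_eq_mul, ← hxu, smul_smul]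
  -- Closed under addition
  have hadd : ∀ p q : (Fin n → ℝ) × ℝ, p ∈ homogenization X →
      q ∈ homogenization X → p + q ∈ homogenization X := by
    rintro ⟨x1, t1⟩ ⟨x2, t2⟩ ⟨ht1, u1, hu1, hx1⟩ ⟨ht2, u2, hu2, hx2⟩
    simp only at ht1 ht2 hx1 hx2
    rcases eq_or_lt_of_le (add_nonneg ht1 ht2) with hs | hs
    · have h1 : t1 = 0 := by linarith
      have h2 : t2 = 0 := by linarith
      subst h1; subst h2
      simp only [zero_smul] at hx1 hx2
      convert hzero using 1
      simp [Prod.ext_iff, ← hx1, ← hx2]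
    · set s := t1 + t2 with hsdef
      have hsne : s ≠ 0 := ne_of_gt hs
      have hmem : (t1 / s) • u1 + (t2 / s) • u2 ∈ X := by
        apply hconv hu1 hu2 (div_nonneg ht1 (le_of_lt hs))
          (div_nonneg ht2 (le_of_lt hs))
        field_simp
        exact hsdef.symm
      refine ⟨le_of_lt hs, _, hmem, ?_⟩
      show s • ((t1 / s) • u1 + (t2 / s) • u2) = x1 + x2
      rw [smul_add, smul_smul, smul_smul, mul_div_cancel₀ _ hsne,
        mul_div_cancel₀ _ hsne, hx1, hx2]
  -- Rewrite the target as a nonnegative combination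
  have key : ((∑ i, lam i * a i) • z + ∑ e, (∑ i, lam i * b i e) • ze e,
      (∑ i, lam i * a i) * yv + ∑ e, (∑ i, lam i * b i e) * y e)
      = ∑ i, lam i • (a i • z + ∑ e, b i e • ze e,
          a i * yv + ∑ e, b i e * y e) := by
    ext
    · simp only [Prod.fst_sum, Prod.smul_fst, smul_add, Finset.sum_add_distrib,
        Finset.sum_smul, smul_smul, Finset.smul_sum]
      rw [Finset.sum_comm]
    · simp only [Prod.snd_sum, Prod.smul_snd, smul_eq_mul, mul_add,
        Finset.sum_add_distrib, Finset.sum_mul, Finset.mul_sum]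
      rw [Finset.sum_comm]
      ring_nf
      have hc : ∑ x, lam x * a x * yv = ∑ x, yv * lam x * a x :=
        Finset.sum_congr rfl (fun x _ => by ring)
      linarith
  rw [key]
  classical
  refine Finset.sum_induction _ (· ∈ homogenization X) hadd hzero ?_
  intro i _
  exact hsmul (lam i) (hlam i) _ (h i)
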